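/- Let 0 < p < q < 1 and let (a_n)_{n≥0} be a sequence of real numbers. If the sequence of q-binomial means (a^q_n)_{n≥0} converges to a real number a, then the sequence of p-binomial means (a^p_n)_{n≥0} also converges to a. -/

import Mathlib

open Filter Finset Topology

/-- The `p`-binomial mean of a sequence. -/
noncomputable def binMean (p : ℝ) (a : ℕ → ℝ) (n : ℕ) : ℝ :=
  ∑ i ∈ Finset.range (n + 1), (n.choose i : ℝ) * p ^ i * (1 - p) ^ (n - i) * a i

lemma binMean_sum_weights (r : ℝ) (n : ℕ) :
    ∑ i ∈ Finset.range (n + 1), (n.choose i : ℝ) * r ^ i * (1 - r) ^ (n - i) = 1 := by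
  have h : ∑ i ∈ Finset.range (n + 1), (n.choose i : ℝ) * r ^ i * (1 - r) ^ (n - i)
      = (r + (1 - r)) ^ n := by
    rw [add_pow]; exact Finset.sum_congr rfl fun i _ => by ring
  rw [h]; norm_num

lemma binMean_weight_tendsto_zero {r : ℝ} (hr0 : 0 < r) (hr1 : r < 1) (i : ℕ) :
    Tendsto (fun n : ℕ => (n.choose i : ℝ) * r ^ i * (1 - r) ^ (n - i)) atTop (𝓝 0) := by
  have h1r : (0:ℝ) < 1 - r := by linarith
  have hmain : Tendsto (fun n : ℕ => (r / (1 - r)) ^ i * ((n : ℝ) ^ i * (1 - r) ^ n))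
      atTop (𝓝 ((r / (1 - r)) ^ i * 0)) :=
    (tendsto_pow_const_mul_const_pow_of_lt_one i (by linarith) (by linarith)).const_mul _
  rw [mul_zero] at hmain
  apply squeeze_zero_norm' _ hmain
  filter_upwards [eventually_ge_atTop i] with n hn
  have hpow : (1 - r) ^ (n - i) = (1 - r) ^ n / (1 - r) ^ i := by
    rw [eq_div_iff (by positivity), ← pow_add, Nat.sub_add_cancel hn]
  have hterm_nonneg : (0:ℝ) ≤ (n.choose i : ℝ) * r ^ i * (1 - r) ^ (n - i) := by positivity
  rw [Real.norm_eq_abs, abs_of_nonneg hterm_nonneg, hpow]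
  have hch : (n.choose i : ℝ) ≤ (n : ℝ) ^ i := by
    exact_mod_cast Nat.cast_le.2 (Nat.choose_le_pow n i)
  calc (n.choose i : ℝ) * r ^ i * ((1 - r) ^ n / (1 - r) ^ i)
      ≤ (n : ℝ) ^ i * r ^ i * ((1 - r) ^ n / (1 - r) ^ i) := by
        apply mul_le_mul_of_nonneg_right (mul_le_mul_of_nonneg_right hch (by positivity))
        positivity
    _ = (r / (1 - r)) ^ i * ((n : ℝ) ^ i * (1 - r) ^ n) := by
        field_simp
        rw [mul_assoc ((n:ℝ)^i), ← mul_pow (1-r) (r/(1-r)) i]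
        congr 2
        field_simp

/-- Regularity of the binomial (Euler) summation method. -/
lemma binMean_tendsto {r : ℝ} (hr0 : 0 < r) (hr1 : r < 1) (b : ℕ → ℝ) (l : ℝ)
    (hb : Tendsto b atTop (𝓝 l)) : Tendsto (binMean r b) atTop (𝓝 l) := by
  have h1r : (0:ℝ) < 1 - r := by linarith
  rw [Metric.tendsto_atTop] at hb ⊢
  intro ε hε
  obtain ⟨N, hN⟩ := hb (ε / 4) (by linarith)
  -- the head sum tends to zero
  have hhead : Tendsto (fun n : ℕ =>
      ∑ i ∈ Finset.range N, (n.choose i : ℝ) * r ^ i * (1 - r) ^ (n - i) * |b i - l|)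
      atTop (𝓝 0) := by
    have := tendsto_finset_sum (Finset.range N) (fun i _ =>
      (binMean_weight_tendsto_zero hr0 hr1 i).mul_const |b i - l|)
    simpa using this
  rw [Metric.tendsto_atTop] at hhead
  obtain ⟨M, hM⟩ := hhead (ε / 4) (by linarith)
  refine ⟨max N M, fun n hn => ?_⟩
  have hnN : N ≤ n := le_trans (le_max_left _ _) hn
  have hnM : M ≤ n := le_trans (le_max_right _ _) hn
  set w : ℕ → ℝ := fun i => (n.choose i : ℝ) * r ^ i * (1 - r) ^ (n - i) with hw
  have hw_nonneg : ∀ i, 0 ≤ w i := fun i => by positivity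
  have hw_sum : ∑ i ∈ Finset.range (n + 1), w i = 1 := binMean_sum_weights r n
  have hdist : dist (binMean r b n) l = |∑ i ∈ Finset.range (n + 1), w i * (b i - l)| := by
    rw [Real.dist_eq]
    congr 1
    have : binMean r b n - l
        = ∑ i ∈ Finset.range (n + 1), w i * b i - ∑ i ∈ Finset.range (n + 1), w i * l := by
      rw [← Finset.sum_mul, hw_sum, one_mul]
      rfl
    rw [this, ← Finset.sum_sub_distrib]
    exact Finset.sum_congr rfl fun i _ => by ring
  rw [hdist]
  have habs : |∑ i ∈ Finset.range (n + 1), w i * (b i - l)|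
      ≤ ∑ i ∈ Finset.range (n + 1), w i * |b i - l| := by
    refine (Finset.abs_sum_le_sum_abs _ _).trans (le_of_eq ?_)
    exact Finset.sum_congr rfl fun i _ => by rw [abs_mul, abs_of_nonneg (hw_nonneg i)]
  -- split the sum
  have hsplit : ∑ i ∈ Finset.range (n + 1), w i * |b i - l|
      = (∑ i ∈ Finset.range N, w i * |b i - l|)
        + ∑ i ∈ Finset.Ico N (n + 1), w i * |b i - l| := by
    rw [Finset.range_eq_Ico, ← Finset.sum_Ico_consecutive _ (Nat.zero_le N) (by omega),
      ← Finset.range_eq_Ico]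
  have hheadlt : ∑ i ∈ Finset.range N, w i * |b i - l| < ε / 4 := by
    have := hM n hnM
    rw [Real.dist_eq, sub_zero] at this
    exact (le_abs_self _).trans_lt this
  have htail : ∑ i ∈ Finset.Ico N (n + 1), w i * |b i - l| ≤ ε / 4 := by
    have h1 : ∑ i ∈ Finset.Ico N (n + 1), w i * |b i - l|
        ≤ ∑ i ∈ Finset.Ico N (n + 1), w i * (ε / 4) := by
      refine Finset.sum_le_sum fun i hi => ?_
      have hiN : N ≤ i := (Finset.mem_Ico.1 hi).1
      have := hN i hiN
      rw [Real.dist_eq] at this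
      exact mul_le_mul_of_nonneg_left this.le (hw_nonneg i)
    have h2 : ∑ i ∈ Finset.Ico N (n + 1), w i ≤ 1 := by
      rw [← hw_sum, Finset.range_eq_Ico]
      refine Finset.sum_le_sum_of_subset_of_nonneg ?_ (fun i _ _ => hw_nonneg i)
      exact Finset.Ico_subset_Ico (Nat.zero_le N) le_rfl
    calc ∑ i ∈ Finset.Ico N (n + 1), w i * |b i - l|
        ≤ ∑ i ∈ Finset.Ico N (n + 1), w i * (ε / 4) := h1
      _ = (∑ i ∈ Finset.Ico N (n + 1), w i) * (ε / 4) := by rw [Finset.sum_mul]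
      _ ≤ 1 * (ε / 4) := mul_le_mul_of_nonneg_right h2 (by linarith)
      _ = ε / 4 := one_mul _
  calc |∑ i ∈ Finset.range (n + 1), w i * (b i - l)|
      ≤ ∑ i ∈ Finset.range (n + 1), w i * |b i - l| := habs
    _ = _ := hsplit
    _ < ε / 4 + ε / 4 := by linarith
    _ < ε := by linarith

/-- The semigroup law for binomial means. -/
lemma binMean_binMean (r q : ℝ) (a : ℕ → ℝ) (n : ℕ) :
    binMean r (binMean q a) n = binMean (r * q) a n := by
  unfold binMean
  -- expand and extend the inner sums to range (n+1)
  have hstep : ∀ k ∈ Finset.range (n + 1),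
      (n.choose k : ℝ) * r ^ k * (1 - r) ^ (n - k)
        * ∑ i ∈ Finset.range (k + 1), (k.choose i : ℝ) * q ^ i * (1 - q) ^ (k - i) * a i
      = ∑ i ∈ Finset.range (n + 1),
          (n.choose k : ℝ) * r ^ k * (1 - r) ^ (n - k)
            * ((k.choose i : ℝ) * q ^ i * (1 - q) ^ (k - i) * a i) := by
    intro k hk
    rw [Finset.mul_sum]
    refine Finset.sum_subset ?_ ?_
    · have hk' := Finset.mem_range.1 hk
      exact Finset.range_subset_range.2 (by omega)
    · intro i _ hi
      have : k < i := by simpa using hi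
      simp [Nat.choose_eq_zero_of_lt this]
  rw [Finset.sum_congr rfl hstep, Finset.sum_comm]
  refine Finset.sum_congr rfl fun i hi => ?_
  have hin : i ≤ n := by simpa using Nat.lt_succ_iff.1 (Finset.mem_range.1 hi)
  -- sum over k; terms with k < i vanish
  have hzero : ∀ k ∈ Finset.range i,
      (n.choose k : ℝ) * r ^ k * (1 - r) ^ (n - k)
        * ((k.choose i : ℝ) * q ^ i * (1 - q) ^ (k - i) * a i) = 0 := by
    intro k hk
    have : k < i := Finset.mem_range.1 hk
    simp [Nat.choose_eq_zero_of_lt this]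
  have hsplit : ∑ k ∈ Finset.range (n + 1),
      (n.choose k : ℝ) * r ^ k * (1 - r) ^ (n - k)
        * ((k.choose i : ℝ) * q ^ i * (1 - q) ^ (k - i) * a i)
      = ∑ k ∈ Finset.Ico i (n + 1),
      (n.choose k : ℝ) * r ^ k * (1 - r) ^ (n - k)
        * ((k.choose i : ℝ) * q ^ i * (1 - q) ^ (k - i) * a i) := by
    rw [Finset.range_eq_Ico, ← Finset.sum_Ico_consecutive _ (Nat.zero_le i) (by omega),
      ← Finset.range_eq_Ico, Finset.sum_congr rfl hzero]
    simp
  rw [hsplit, Finset.sum_Ico_eq_sum_range]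
  have hlen : n + 1 - i = n - i + 1 := by omega
  rw [hlen]
  -- now reindex with k = i + j
  have hterm : ∀ j ∈ Finset.range (n - i + 1),
      (n.choose (i + j) : ℝ) * r ^ (i + j) * (1 - r) ^ (n - (i + j))
        * (((i + j).choose i : ℝ) * q ^ i * (1 - q) ^ (i + j - i) * a i)
      = ((n.choose i : ℝ) * (r * q) ^ i * a i)
        * (((n - i).choose j : ℝ) * (r * (1 - q)) ^ j * (1 - r) ^ (n - i - j)) := by
    intro j hj
    have hjle : j ≤ n - i := Nat.lt_succ_iff.1 (Finset.mem_range.1 hj)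
    have hkn : i + j ≤ n := by omega
    have hchoose : (n.choose (i + j) : ℕ) * ((i + j).choose i) = n.choose i * (n - i).choose j := by
      have := Nat.choose_mul (n := n) (Nat.le_add_right i j)
      simpa [Nat.add_sub_cancel_left] using this
    have hchooseR : ((n.choose (i + j) : ℝ)) * (((i + j).choose i : ℝ))
        = (n.choose i : ℝ) * ((n - i).choose j : ℝ) := by exact_mod_cast hchoose
    have hsub : n - (i + j) = n - i - j := by omega
    have hsub2 : i + j - i = j := by omega
    rw [hsub, hsub2]
    calc (n.choose (i + j) : ℝ) * r ^ (i + j) * (1 - r) ^ (n - i - j)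
          * (((i + j).choose i : ℝ) * q ^ i * (1 - q) ^ j * a i)
        = ((n.choose (i + j) : ℝ) * (((i + j).choose i : ℝ)))
          * (r ^ (i + j) * (1 - r) ^ (n - i - j) * q ^ i * (1 - q) ^ j * a i) := by ring
      _ = ((n.choose i : ℝ) * ((n - i).choose j : ℝ))
          * (r ^ (i + j) * (1 - r) ^ (n - i - j) * q ^ i * (1 - q) ^ j * a i) := by
          rw [hchooseR]
      _ = _ := by rw [pow_add, mul_pow r (1 - q) j, mul_pow r q i]; ring
  rw [Finset.sum_congr rfl hterm, ← Finset.mul_sum]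
  have hbin : ∑ j ∈ Finset.range (n - i + 1),
      ((n - i).choose j : ℝ) * (r * (1 - q)) ^ j * (1 - r) ^ (n - i - j)
      = (1 - r * q) ^ (n - i) := by
    have h := add_pow (r * (1 - q)) (1 - r) (n - i)
    have heq : r * (1 - q) + (1 - r) = 1 - r * q := by ring
    rw [heq] at h
    rw [h]
    exact Finset.sum_congr rfl fun j _ => by ring
  rw [hbin]
  ring

theorem binMean_q_tendsto_imp_binMean_p_tendsto
    (p q : ℝ) (hp0 : 0 < p) (hpq : p < q) (hq1 : q < 1)
    (a : ℕ → ℝ) (l : ℝ) (h : Tendsto (binMean q a) atTop (nhds l)) :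
    Tendsto (binMean p a) atTop (nhds l) := by
  have hq0 : 0 < q := hp0.trans hpq
  have hr0 : 0 < p / q := div_pos hp0 hq0
  have hr1 : p / q < 1 := (div_lt_one hq0).2 hpq
  have key := binMean_tendsto hr0 hr1 (binMean q a) l h
  have heq : ∀ n, binMean (p / q) (binMean q a) n = binMean p a n := by
    intro n
    rw [binMean_binMean, div_mul_cancel₀ p hq0.ne']
  exact key.congr heq
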